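/- arXiv:1103.0545 — 8 statements merged into one kernel-verified Lean document; each statement's English description precedes it below -/
import Mathlib

section
/- The Gossez operator G is anti-symmetric: for all x, y ∈ ℓ¹, ⟨Gx, y⟩ = −⟨Gy, x⟩, where ⟨z, w⟩ = Σ_n z_n w_n for z ∈ ℓ^∞ and w ∈ ℓ¹. In particular ⟨Gx, x⟩ = 0 for all x ∈ ℓ¹. -/
open Finset

/-- Gossez's operator: `(G x) n = (sum over k > n of x k) - (sum over k < n of x k)`. -/
noncomputable def gossez (x : ℕ → ℝ) (n : ℕ) : ℝ :=
  (∑' k : ℕ, x (n + 1 + k)) - ∑ k ∈ Finset.range n, x k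

namespace GossezAux

/-- The "strictly lower triangular" kernel `x_m y_n` for `m > n`. -/
noncomputable def F (x y : ℕ → ℝ) (p : ℕ × ℕ) : ℝ :=
  if p.2 < p.1 then x p.1 * y p.2 else 0

lemma hF {x y : ℕ → ℝ} (hx : Summable fun n => |x n|) (hy : Summable fun n => |y n|) :
    Summable (F x y) := by
  have hprod : Summable fun p : ℕ × ℕ => |x p.1| * |y p.2| :=
    hx.mul_of_nonneg hy (fun n => abs_nonneg _) (fun n => abs_nonneg _)
  apply Summable.of_abs
  apply Summable.of_nonneg_of_le (fun p => abs_nonneg _) _ hprod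
  intro p
  unfold F
  split_ifs
  · rw [abs_mul]
  · simpa using mul_nonneg (abs_nonneg (x p.1)) (abs_nonneg (y p.2))

def S : Set (ℕ × ℕ) := {p | p.2 < p.1}

def e : ℕ × ℕ ≃ S where
  toFun p := ⟨(p.1 + 1 + p.2, p.1), by simp only [S, Set.mem_setOf_eq]; omega⟩
  invFun q := (q.1.2, q.1.1 - 1 - q.1.2)
  left_inv p := by
    obtain ⟨a, b⟩ := p
    simp only
    congr 1
    omega
  right_inv q := by
    obtain ⟨⟨a, b⟩, h⟩ := q
    simp only [S, Set.mem_setOf_eq] at h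
    apply Subtype.ext
    simp only
    have h1 : b + 1 + (a - 1 - b) = a := by omega
    rw [h1]

set_option maxHeartbeats 1000000 in
lemma tsumF_eq_A {x y : ℕ → ℝ} (hx : Summable fun n => |x n|) (hy : Summable fun n => |y n|) :
    ∑' p : ℕ × ℕ, F x y p = ∑' n, (∑' k, x (n + 1 + k)) * y n := by
  have hsupp : Function.support (F x y) ⊆ S := by
    intro p hp
    simp only [Function.mem_support, F] at hp
    by_contra h
    simp only [S, Set.mem_setOf_eq] at h
    exact hp (if_neg h)
  rw [← tsum_subtype_eq_of_support_subset hsupp, ← e.tsum_eq]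
  have hval : ∀ p : ℕ × ℕ, F x y (e p : ℕ × ℕ) = x (p.1 + 1 + p.2) * y p.1 := by
    intro p
    simp only [e, Equiv.coe_fn_mk, F]
    exact if_pos (by omega)
  have hsum : Summable fun p : ℕ × ℕ => F x y (e p : ℕ × ℕ) :=
    (Equiv.summable_iff e).2 ((hF hx hy).subtype _)
  have hfib : ∀ n, Summable fun k => F x y (e (n, k) : ℕ × ℕ) := by
    intro n
    have : Summable fun k => x (n + 1 + k) * y n :=
      ((hx.of_abs).comp_injective (add_right_injective (n + 1))).mul_right _
    exact this.congr fun k => (hval (n, k)).symm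
  calc (∑' p : ℕ × ℕ, F x y (e p : ℕ × ℕ))
      = ∑' n, ∑' k, F x y (e (n, k) : ℕ × ℕ) := hsum.tsum_prod' hfib
    _ = ∑' n, ∑' k, x (n + 1 + k) * y n := by
        congr 1; funext n; congr 1; funext k; exact hval (n, k)
    _ = ∑' n, (∑' k, x (n + 1 + k)) * y n := by
        congr 1; funext n; exact tsum_mul_right

lemma tsumF_eq_B {x y : ℕ → ℝ} (hx : Summable fun n => |x n|) (hy : Summable fun n => |y n|) :
    ∑' p : ℕ × ℕ, F x y p = ∑' n, (∑ k ∈ Finset.range n, y k) * x n := by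
  have hfib : ∀ n, Summable fun k => F x y (n, k) := by
    intro n
    apply summable_of_ne_finset_zero (s := Finset.range n)
    intro k hk
    simp only [Finset.mem_range, not_lt] at hk
    exact if_neg (by omega)
  rw [(hF hx hy).tsum_prod' hfib]
  congr 1; funext n
  have : ∑' k, F x y (n, k) = ∑ k ∈ Finset.range n, F x y (n, k) := by
    apply tsum_eq_sum
    intro k hk
    simp only [Finset.mem_range, not_lt] at hk
    exact if_neg (by omega)
  rw [this]
  rw [Finset.sum_mul]
  apply Finset.sum_congr rfl
  intro k hk
  simp only [Finset.mem_range] at hk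
  simp only [F, if_pos hk]
  ring

lemma pairing {x y : ℕ → ℝ} (hx : Summable fun n => |x n|) (hy : Summable fun n => |y n|) :
    (∑' n : ℕ, gossez x n * y n) = (∑' p : ℕ × ℕ, F x y p) - ∑' p : ℕ × ℕ, F y x p := by
  set C := ∑' n, |x n| with hC
  have hC0 : 0 ≤ C := tsum_nonneg fun n => abs_nonneg _
  have htail : ∀ n, Summable fun k => x (n + 1 + k) := fun n =>
    (hx.of_abs).comp_injective (add_right_injective (n + 1))
  have htail_abs : ∀ n, Summable fun k => |x (n + 1 + k)| := fun n =>
    hx.comp_injective (add_right_injective (n + 1))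
  have hbound1 : ∀ n, |∑' k, x (n + 1 + k)| ≤ C := by
    intro n
    calc |∑' k, x (n + 1 + k)| ≤ ∑' k, |x (n + 1 + k)| := by
          simpa using norm_tsum_le_tsum_norm (f := fun k => x (n + 1 + k))
            (by simpa using htail_abs n)
      _ ≤ C := (htail_abs n).tsum_le_tsum_of_inj (fun k => n + 1 + k) (add_right_injective (n + 1))
          (fun c _ => abs_nonneg _) (fun k => le_refl _) hx
  have hbound2 : ∀ n, |∑ k ∈ Finset.range n, x k| ≤ C := by
    intro n
    calc |∑ k ∈ Finset.range n, x k| ≤ ∑ k ∈ Finset.range n, |x k| :=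
          Finset.abs_sum_le_sum_abs _ _
      _ ≤ C := hx.sum_le_tsum _ (fun k _ => abs_nonneg _)
  have hsum1 : Summable fun n => (∑' k, x (n + 1 + k)) * y n := by
    apply Summable.of_abs
    apply Summable.of_nonneg_of_le (fun n => abs_nonneg _) _ (hy.mul_left C)
    intro n
    rw [abs_mul]
    exact mul_le_mul_of_nonneg_right (hbound1 n) (abs_nonneg _)
  have hsum2 : Summable fun n => (∑ k ∈ Finset.range n, x k) * y n := by
    apply Summable.of_abs
    apply Summable.of_nonneg_of_le (fun n => abs_nonneg _) _ (hy.mul_left C)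
    intro n
    rw [abs_mul]
    exact mul_le_mul_of_nonneg_right (hbound2 n) (abs_nonneg _)
  calc (∑' n : ℕ, gossez x n * y n)
      = ∑' n, ((∑' k, x (n + 1 + k)) * y n - (∑ k ∈ Finset.range n, x k) * y n) := by
        congr 1; funext n; simp [gossez, sub_mul]
    _ = (∑' n, (∑' k, x (n + 1 + k)) * y n) - ∑' n, (∑ k ∈ Finset.range n, x k) * y n :=
        hsum1.tsum_sub hsum2
    _ = (∑' p : ℕ × ℕ, F x y p) - ∑' p : ℕ × ℕ, F y x p := by
        rw [tsumF_eq_A hx hy, tsumF_eq_B hy hx]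

end GossezAux

theorem gossez_antisymmetric (x y : ℕ → ℝ) (hx : Summable fun n => |x n|)
    (hy : Summable fun n => |y n|) :
    (∑' n : ℕ, gossez x n * y n) = -(∑' n : ℕ, gossez y n * x n) ∧
    (∑' n : ℕ, gossez x n * x n) = 0 := by
  have h1 := GossezAux.pairing hx hy
  have h2 := GossezAux.pairing hy hx
  constructor
  · rw [h1, h2]; ring
  · have h3 := GossezAux.pairing hx hx
    rw [h3]; ring
end

section
/- For every x ∈ ℓ¹, the sequence G(x) + ⟨x, e⟩·e converges to 0, i.e., lies in c₀ (the space ℓ^∞₀ of bounded sequences tending to 0). -/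
theorem gossez_shift_mem_c0 (x : ℕ → ℝ) (hx : Summable fun n => |x n|) :
    Filter.Tendsto (fun n => gossez x n + (∑' k : ℕ, x k)) Filter.atTop (nhds 0) := by
  have hs : Summable x := summable_abs_iff.mp hx
  have hP : Filter.Tendsto (fun n => ∑ k ∈ Finset.range n, x k) Filter.atTop
      (nhds (∑' k, x k)) := hs.hasSum.tendsto_sum_nat
  have key : ∀ n, gossez x n + (∑' k : ℕ, x k) =
      ((∑' k, x k) - ∑ k ∈ Finset.range (n + 1), x k) +
      ((∑' k, x k) - ∑ k ∈ Finset.range n, x k) := by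
    intro n
    have h := hs.sum_add_tsum_nat_add (n + 1)
    have h2 : (∑' k : ℕ, x (n + 1 + k)) = ∑' k : ℕ, x (k + (n + 1)) := by
      congr 1; funext k; rw [add_comm]
    unfold gossez
    rw [h2]
    linarith [h]
  rw [funext key]
  have h1 := ((hP.comp (Filter.tendsto_add_atTop_nat 1)).const_sub (∑' k, x k)).add
    (hP.const_sub (∑' k, x k))
  simpa using h1
end

section
/- For the operator A(x) = G(x) + ⟨x, e⟩·e on ℓ¹, one has ⟨A(x), x⟩ = ⟨x, e⟩² for every x ∈ ℓ¹; in particular A is a monotone linear operator (⟨A(x), x⟩ ≥ 0). -/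
/-- The operator `A x = G x + ⟨x, e⟩ • e`. -/
noncomputable def opA (x : ℕ → ℝ) (n : ℕ) : ℝ := gossez x n + ∑' k : ℕ, x k

theorem opA_monotone (x : ℕ → ℝ) (hx : Summable fun n => |x n|) :
    (∑' n : ℕ, opA x n * x n) = (∑' k : ℕ, x k) ^ 2 ∧
    0 ≤ ∑' n : ℕ, opA x n * x n := by
  have hxs : Summable x := hx.of_abs
  set S : ℝ := ∑' k : ℕ, x k with hS
  set s : ℕ → ℝ := fun n => ∑ k ∈ Finset.range n, x k with hsdef
  set T : ℝ := ∑' n : ℕ, |x n| with hT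
  -- bound on partial sums
  have hsb : ∀ m, |s m| ≤ T := by
    intro m
    calc |s m| ≤ ∑ k ∈ Finset.range m, |x k| := Finset.abs_sum_le_sum_abs _ _
    _ ≤ T := Summable.sum_le_tsum _ (fun k _ => abs_nonneg _) hx
  -- gossez in terms of partial sums
  have hg : ∀ n, gossez x n = S - s (n + 1) - s n := by
    intro n
    have h1 : (fun k => x (n + 1 + k)) = fun k => x (k + (n + 1)) := by
      funext k; rw [add_comm]
    have h2 := Summable.sum_add_tsum_nat_add (f := x) (n + 1) hxs
    simp only [gossez, h1]
    simp only [hsdef, hS]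
    linarith [h2]
  -- the telescoping sequence
  set g : ℕ → ℝ := fun n => (s (n + 1) + s n) * x n with hgdef
  have hgsum : Summable g := by
    apply Summable.of_norm_bounded (g := fun n => (2 * T) * |x n|) (hx.mul_left (2 * T))
    intro n
    simp only [hgdef, Real.norm_eq_abs, abs_mul]
    have := hsb (n + 1)
    have := hsb n
    have h0 : |s (n + 1) + s n| ≤ 2 * T := by
      calc |s (n + 1) + s n| ≤ |s (n + 1)| + |s n| := abs_add_le _ _
      _ ≤ 2 * T := by linarith
    exact mul_le_mul_of_nonneg_right h0 (abs_nonneg _)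
  have hgtel : ∀ n, g n = s (n + 1) ^ 2 - s n ^ 2 := by
    intro n
    have : s (n + 1) = s n + x n := Finset.sum_range_succ x n
    simp only [hgdef, this]; ring
  -- tsum of g equals S^2
  have hgt : (∑' n, g n) = S ^ 2 := by
    have h1 : Filter.Tendsto (fun N => ∑ n ∈ Finset.range N, g n) Filter.atTop
        (nhds (∑' n, g n)) := hgsum.hasSum.tendsto_sum_nat
    have h2 : (fun N => ∑ n ∈ Finset.range N, g n) = fun N => s N ^ 2 := by
      funext N
      have := Finset.sum_range_sub (fun n => s n ^ 2) N
      simp only [hgtel]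
      simpa [hsdef] using this
    rw [h2] at h1
    have h3 : Filter.Tendsto (fun N => s N ^ 2) Filter.atTop (nhds (S ^ 2)) :=
      (hxs.hasSum.tendsto_sum_nat).pow 2
    exact tendsto_nhds_unique h1 h3
  -- rewrite the main summand
  have hf : ∀ n, opA x n * x n = 2 * S * x n - g n := by
    intro n
    simp only [opA, hg n, hgdef, ← hS]
    ring
  have hsum2S : Summable (fun n => 2 * S * x n) := hxs.mul_left _
  have hmain : (∑' n : ℕ, opA x n * x n) = S ^ 2 := by
    calc (∑' n : ℕ, opA x n * x n) = ∑' n : ℕ, (2 * S * x n - g n) := by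
          exact tsum_congr hf
    _ = (∑' n, 2 * S * x n) - ∑' n, g n := Summable.tsum_sub hsum2S hgsum
    _ = 2 * S * S - S ^ 2 := by rw [tsum_mul_left, hgt, ← hS]
    _ = S ^ 2 := by ring
  exact ⟨hmain, hmain ▸ sq_nonneg S⟩
end

section
/- If x ∈ ℓ¹ satisfies G(x) = 0 and Σ_k x_k = 0, then x = 0. Consequently the operator A(x) = G(x) + ⟨x,e⟩·e is injective on ℓ¹. -/
lemma shift_summable {x : ℕ → ℝ} (hx : Summable x) (m : ℕ) :
    Summable fun k => x (m + k) :=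
  hx.comp_injective (add_right_injective m)

lemma gossez_succ {x : ℕ → ℝ} (hx : Summable x) (n : ℕ) :
    gossez x (n + 1) = gossez x n - x (n + 1) - x n := by
  unfold gossez
  have h1 : (∑' k : ℕ, x (n + 1 + k)) = x (n + 1) + ∑' k : ℕ, x (n + 2 + k) := by
    rw [Summable.tsum_eq_zero_add (shift_summable hx (n + 1))]
    congr 1
    exact tsum_congr fun k => congrArg x (by omega)
  have h2 : (∑' k : ℕ, x (n + 1 + 1 + k)) = ∑' k : ℕ, x (n + 2 + k) :=
    tsum_congr fun k => congrArg x (by omega)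
  rw [h2, Finset.sum_range_succ, h1]
  ring

lemma zero_of_gossez_step {x : ℕ → ℝ} (hx : Summable fun n => |x n|)
    (h : ∀ n, gossez x (n + 1) = gossez x n) : ∀ n, x n = 0 := by
  have hx' : Summable x := summable_abs_iff.1 hx
  have hstep : ∀ n, x (n + 1) = -x n := by
    intro n
    have := gossez_succ hx' n
    rw [h n] at this
    linarith
  have habs : ∀ n, |x n| = |x 0| := by
    intro n
    induction n with
    | zero => rfl
    | succ n ih => rw [hstep n, abs_neg, ih]
  have h0 : |x 0| = 0 := by
    have hc : Summable fun _ : ℕ => |x 0| := hx.congr fun n => habs n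
    exact (summable_const_iff _).1 hc
  intro n
  have := habs n
  rw [h0] at this
  exact abs_eq_zero.1 this

lemma gossez_sub {x y : ℕ → ℝ} (hx : Summable x) (hy : Summable y) (n : ℕ) :
    gossez (fun k => x k - y k) n = gossez x n - gossez y n := by
  unfold gossez
  rw [Summable.tsum_sub (shift_summable hx (n + 1)) (shift_summable hy (n + 1)),
    Finset.sum_sub_distrib]
  ring

theorem opA_injective :
    (∀ x : ℕ → ℝ, (Summable fun n => |x n|) →
      (∀ n, gossez x n = 0) → (∑' k : ℕ, x k) = 0 → ∀ n, x n = 0) ∧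
    (∀ x y : ℕ → ℝ, (Summable fun n => |x n|) → (Summable fun n => |y n|) →
      (∀ n, opA x n = opA y n) → x = y) := by
  constructor
  · intro x hx hg _
    exact zero_of_gossez_step hx fun n => by rw [hg n, hg (n + 1)]
  · intro x y hx hy h
    have hx' : Summable x := summable_abs_iff.1 hx
    have hy' : Summable y := summable_abs_iff.1 hy
    set z : ℕ → ℝ := fun k => x k - y k with hz
    have hz' : Summable z := hx'.sub hy'
    have hzabs : Summable fun n => |z n| := summable_abs_iff.2 hz'
    have hc : ∀ n, gossez z n = (∑' k : ℕ, y k) - ∑' k : ℕ, x k := by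
      intro n
      have := h n
      unfold opA at this
      rw [gossez_sub hx' hy' n]
      linarith
    have hzero : ∀ n, z n = 0 :=
      zero_of_gossez_step hzabs fun n => by rw [hc n, hc (n + 1)]
    funext n
    have := hzero n
    simpa [hz, sub_eq_zero] using this
end

section
/- If x ∈ ℓ¹ satisfies (Gx)_n = (Gx)_{n+1} for all n (equivalently G x is constant), then x_n + x_{n+1} = 0 for all n, hence x_n = (−1)^{n+1} x_1; and since x ∈ ℓ¹ this forces x = 0. -/
theorem gossez_const_implies_zero (x : ℕ → ℝ) (hx : Summable fun n => |x n|)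
    (h : ∀ n : ℕ, gossez x n = gossez x (n + 1)) :
    (∀ n : ℕ, x n + x (n + 1) = 0) ∧
    (∀ n : ℕ, x n = (-1) ^ n * x 0) ∧
    (∀ n : ℕ, x n = 0) := by
  have hsx : Summable x := summable_abs_iff.mp hx
  have h1 : ∀ n : ℕ, x n + x (n + 1) = 0 := by
    intro n
    have hsn : Summable (fun k => x (n + 1 + k)) := hsx.comp_injective (add_right_injective (n + 1))
    have ht : (∑' k : ℕ, x (n + 1 + k)) = x (n + 1) + ∑' k : ℕ, x (n + 2 + k) := by
      rw [Summable.tsum_eq_zero_add hsn]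
      congr 1
      apply tsum_congr
      intro k
      congr 1
      omega
    have hG := h n
    simp only [gossez, ht, Finset.sum_range_succ] at hG
    linarith
  have h2 : ∀ n : ℕ, x n = (-1) ^ n * x 0 := by
    intro n
    induction n with
    | zero => simp
    | succ k ih =>
      have := h1 k
      rw [pow_succ]
      linarith [ih]
  refine ⟨h1, h2, ?_⟩
  have habs : ∀ n : ℕ, |x n| = |x 0| := by
    intro n
    rw [h2 n, abs_mul, abs_pow, abs_neg, abs_one, one_pow, one_mul]
  have htend : Filter.Tendsto (fun n => |x n|) Filter.atTop (nhds 0) := hx.tendsto_atTop_zero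
  have h0 : |x 0| = 0 := by
    have ht0 : Filter.Tendsto (fun _ : ℕ => |x 0|) Filter.atTop (nhds 0) := by
      simpa [habs] using htend
    exact tendsto_nhds_unique tendsto_const_nhds ht0
  intro n
  have := habs n
  rw [h0] at this
  exact abs_eq_zero.mp this
end

section
/- Let X be a real Banach space, A : X* → X a linear, monotone, injective, everywhere-defined operator, and suppose there exists x₀** ∈ X** \ X with β := sup_{x* ∈ X*}( ⟨x*, x₀**⟩ − ⟨A(x*), x*⟩ ) < ∞. Then there exists x₀*** ∈ X*** vanishing on X with ⟨x₀**, x₀***⟩ > β, and consequently sup_{x* ∈ X*}( ⟨x*, x₀**⟩ + ⟨A(x*), x₀***⟩ − ⟨A(x*), x*⟩ ) = β < ⟨x₀**, x₀***⟩. -/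
open NormedSpace

theorem key_inequality_for_inverse_not_typeD
    (X : Type*) [NormedAddCommGroup X] [NormedSpace ℝ X] [CompleteSpace X]
    (A : StrongDual ℝ X →ₗ[ℝ] X)
    (hmono : ∀ f : StrongDual ℝ X, 0 ≤ f (A f))
    (hinj : Function.Injective A)
    (x₀ : StrongDual ℝ (StrongDual ℝ X))
    (hx₀ : x₀ ∉ Set.range (inclusionInDoubleDual ℝ X))
    (β : ℝ)
    (hβ : IsLUB {r : ℝ | ∃ f : StrongDual ℝ X, r = x₀ f - f (A f)} β) :
    ∃ φ : StrongDual ℝ (StrongDual ℝ (StrongDual ℝ X)),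
      (∀ x : X, φ (inclusionInDoubleDual ℝ X x) = 0) ∧
      φ x₀ > β ∧
      IsLUB {r : ℝ | ∃ f : StrongDual ℝ X,
        r = x₀ f + φ (inclusionInDoubleDual ℝ X (A f)) - f (A f)} β ∧
      β < φ x₀ := by
  -- β ≥ 0 since 0 is in the set
  have hβ0 : 0 ≤ β := hβ.1 ⟨0, by simp⟩
  -- The range of the canonical embedding is a closed subspace
  set S : Set (StrongDual ℝ (StrongDual ℝ X)) := Set.range (inclusionInDoubleDual ℝ X) with hS
  have hrange : S = Set.range (inclusionInDoubleDualLi ℝ (E := X)) := rfl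
  have hclosed : IsClosed S := by
    rw [hrange]
    exact ((inclusionInDoubleDualLi ℝ (E := X)).isometry.isClosedEmbedding
      (γ := StrongDual ℝ (StrongDual ℝ X))).isClosed_range
  have hconv : Convex ℝ S := by
    rintro _ ⟨a, rfl⟩ _ ⟨b, rfl⟩ s t hs ht hst
    exact ⟨s • a + t • b, by simp⟩
  obtain ⟨l, u, hl, hu⟩ := geometric_hahn_banach_closed_point hconv hclosed hx₀
  -- l vanishes on S
  have hlS : ∀ x : X, l (inclusionInDoubleDual ℝ X x) = 0 := by
    intro x
    by_contra h
    have key : ∀ t : ℝ, t * l (inclusionInDoubleDual ℝ X x) < u := by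
      intro t
      have := hl (inclusionInDoubleDual ℝ X (t • x)) ⟨t • x, rfl⟩
      simpa [map_smul] using this
    rcases lt_or_gt_of_ne h with hneg | hpos
    · have := key (u / l (inclusionInDoubleDual ℝ X x) - 1)
      rw [sub_one_mul, div_mul_cancel₀ _ h] at this
      linarith [this, hneg]
    · have := key ((u + 1) / l (inclusionInDoubleDual ℝ X x))
      rw [div_mul_cancel₀ _ h] at this
      linarith
  have hu0 : 0 < u := by
    have := hl 0 ⟨0, by simp⟩
    simpa using this
  have hlx₀ : 0 < l x₀ := hu0.trans hu
  refine ⟨((β + 1) / l x₀) • l, ?_, ?_, ?_, ?_⟩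
  · intro x; simp [hlS x]
  · have : (((β + 1) / l x₀) • l) x₀ = β + 1 := by
      simp [div_mul_cancel₀ _ hlx₀.ne']
    rw [this]; linarith
  · have heq : {r : ℝ | ∃ f : StrongDual ℝ X,
        r = x₀ f + (((β + 1) / l x₀) • l) (inclusionInDoubleDual ℝ X (A f)) - f (A f)}
        = {r : ℝ | ∃ f : StrongDual ℝ X, r = x₀ f - f (A f)} := by
      ext r
      constructor <;> rintro ⟨f, rfl⟩ <;> exact ⟨f, by simp [hlS (A f)]⟩
    rw [heq]; exact hβ
  · have : (((β + 1) / l x₀) • l) x₀ = β + 1 := by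
      simp [div_mul_cancel₀ _ hlx₀.ne']
    rw [this]; linarith
end

section
/- Let T : X ⇉ X* be maximal monotone. Then the Gossez closure 𝑇̃ : X** ⇉ X*, with graph {(x**, x*) : ⟨x* − y*, x** − y⟩ ≥ 0 for all (y, y*) ∈ graph T}, is a monotone extension of T (viewing X ⊆ X**) whenever T is of type (D); in particular graph(T) ⊆ graph(𝑇̃). -/
open NormedSpace

variable (X : Type*) [NormedAddCommGroup X] [NormedSpace ℝ X]

/-- A set-valued operator `T : X ⇉ X*`, given by its graph, is monotone. -/
def IsMonotoneGraph (T : Set (X × StrongDual ℝ X)) : Prop :=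
  ∀ p ∈ T, ∀ q ∈ T, 0 ≤ (p.2 - q.2) (p.1 - q.1)

/-- Maximal monotone: monotone and maximal among monotone graphs. -/
def IsMaximalMonotone (T : Set (X × StrongDual ℝ X)) : Prop :=
  IsMonotoneGraph X T ∧ ∀ S : Set (X × StrongDual ℝ X), IsMonotoneGraph X S → T ⊆ S → S = T

/-- Gossez's monotone closure of `T`, as a subset of `X** × X*`:
`(x**, x*)` is in the closure iff `⟨x* - y*, x** - y⟩ ≥ 0` for all `(y, y*) ∈ T`. -/
def gossezClosure (T : Set (X × StrongDual ℝ X)) :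
    Set (StrongDual ℝ (StrongDual ℝ X) × StrongDual ℝ X) :=
  {p | ∀ q ∈ T, 0 ≤ p.1 (p.2 - q.2) - (p.2 - q.2) q.1}

/-- Gossez type (D): every point of the Gossez closure is the limit of a bounded net
from the graph, in the σ(X**, X*) × strong topology. -/
def IsTypeD (T : Set (X × StrongDual ℝ X)) : Prop :=
  ∀ p ∈ gossezClosure X T,
    ∃ (ι : Type) (l : Filter ι), l.NeBot ∧
      ∃ u : ι → X × StrongDual ℝ X,
        (∀ i, u i ∈ T) ∧
        (∃ C : ℝ, ∀ i, ‖(u i).1‖ + ‖(u i).2‖ ≤ C) ∧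
        (∀ g : StrongDual ℝ X, Filter.Tendsto (fun i => g ((u i).1)) l (nhds (p.1 g))) ∧
        Filter.Tendsto (fun i => (u i).2) l (nhds p.2)

theorem gossezClosure_monotone_extension
    (T : Set (X × StrongDual ℝ X)) (hT : IsMaximalMonotone X T) (hD : IsTypeD X T) :
    (∀ p ∈ gossezClosure X T, ∀ q ∈ gossezClosure X T,
        0 ≤ (p.1 - q.1) (p.2 - q.2)) ∧
    (∀ p ∈ T, (inclusionInDoubleDual ℝ X p.1, p.2) ∈ gossezClosure X T) := by
  obtain ⟨hmono, _⟩ := hT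
  constructor
  · intro p hp q hq
    obtain ⟨ι, l, hne, u, huT, ⟨C, hC⟩, hw, hs⟩ := hD p hp
    have hnn : ∀ i, 0 ≤ q.1 (q.2 - (u i).2) - (q.2 - (u i).2) ((u i).1) :=
      fun i => hq (u i) (huT i)
    have hC1 : ∀ i, ‖(u i).1‖ ≤ C :=
      fun i => le_trans (le_add_of_nonneg_right (norm_nonneg _)) (hC i)
    have hz : Filter.Tendsto (fun i => (u i).2 ((u i).1) - p.2 ((u i).1)) l (nhds 0) := by
      have hn : Filter.Tendsto (fun i => ‖(u i).2 - p.2‖ * C) l (nhds 0) := by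
        have := (tendsto_iff_norm_sub_tendsto_zero.mp hs).mul_const C
        simpa using this
      apply squeeze_zero_norm _ hn
      intro i
      calc ‖(u i).2 ((u i).1) - p.2 ((u i).1)‖
          = ‖((u i).2 - p.2) ((u i).1)‖ := by simp
        _ ≤ ‖(u i).2 - p.2‖ * ‖(u i).1‖ := ContinuousLinearMap.le_opNorm _ _
        _ ≤ ‖(u i).2 - p.2‖ * C := mul_le_mul_of_nonneg_left (hC1 i) (norm_nonneg _)
    have t1 : Filter.Tendsto (fun i => (u i).2 ((u i).1)) l (nhds (p.1 p.2)) := by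
      have := hz.add (hw p.2)
      simpa using this
    have t2 : Filter.Tendsto (fun i => q.1 ((u i).2)) l (nhds (q.1 p.2)) :=
      (q.1.continuous.tendsto p.2).comp hs
    have t3 : Filter.Tendsto (fun i => q.2 ((u i).1)) l (nhds (p.1 q.2)) := hw q.2
    have hF : Filter.Tendsto
        (fun i => q.1 (q.2 - (u i).2) - (q.2 - (u i).2) ((u i).1)) l
        (nhds (q.1 q.2 - q.1 p.2 - (p.1 q.2 - p.1 p.2))) := by
      have h := (Filter.Tendsto.sub (tendsto_const_nhds : Filter.Tendsto (fun _ : ι => q.1 q.2) l (nhds (q.1 q.2))) t2).sub (t3.sub t1)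
      refine h.congr fun i => ?_
      simp [map_sub, ContinuousLinearMap.sub_apply]
    have hlim : 0 ≤ q.1 q.2 - q.1 p.2 - (p.1 q.2 - p.1 p.2) :=
      ge_of_tendsto' hF hnn
    have : (p.1 - q.1) (p.2 - q.2) = q.1 q.2 - q.1 p.2 - (p.1 q.2 - p.1 p.2) := by
      simp [ContinuousLinearMap.sub_apply, map_sub]
      ring
    linarith [hlim, this.ge, this.le]
  · intro p hp q hq
    have h := hmono p hp q hq
    simpa [gossezClosure, inclusionInDoubleDual, map_sub,
      ContinuousLinearMap.sub_apply, sub_nonneg] using h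
end

section
/- Define S : c₀ × ℝ ⇉ ℓ¹ × ℝ by graph(S) = {((A(x*), t), (x*, t³)) : x* ∈ ℓ¹, t ∈ ℝ}, where A(x) = G(x) + ⟨x,e⟩·e. Then S is a monotone operator (on (c₀ × ℝ) × (ℓ¹ × ℝ) with the product duality pairing). -/
theorem nonlinear_example_monotone
    (x y : ℕ → ℝ) (hx : Summable fun n => |x n|) (hy : Summable fun n => |y n|)
    (s t : ℝ) :
    0 ≤ (∑' n : ℕ, (opA x n - opA y n) * (x n - y n)) +
      (s - t) * (s ^ 3 - t ^ 3) := by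
  have hxs : Summable x := summable_abs_iff.mp hx
  have hys : Summable y := summable_abs_iff.mp hy
  have hzs : Summable fun n => x n - y n := hxs.sub hys
  have hzabs : Summable fun n => |x n - y n| := summable_abs_iff.mpr hzs
  set T : ℕ → ℝ := fun n => ∑' k, (x (k + n) - y (k + n)) with hT_def
  have hzn : ∀ n : ℕ, Summable fun k => x (k + n) - y (k + n) :=
    fun n => (summable_nat_add_iff n).mpr hzs
  set M : ℝ := ∑' n, |x n - y n| with hM_def
  -- bound on tails
  have hTle : ∀ n, |T n| ≤ M := by
    intro n
    have h1 : |T n| ≤ ∑' k, |x (k + n) - y (k + n)| := by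
      simpa [Real.norm_eq_abs] using
        norm_tsum_le_tsum_norm (f := fun k => x (k + n) - y (k + n))
          (by simpa [Real.norm_eq_abs] using
            (summable_nat_add_iff (f := fun m => |x m - y m|) n).mpr hzabs)
    have h2 : ∑' k, |x (k + n) - y (k + n)| ≤ M := by
      have h3 := hzabs.sum_add_tsum_nat_add (f := fun m => |x m - y m|) n
      have hpos : 0 ≤ ∑ i ∈ Finset.range n, |x i - y i| :=
        Finset.sum_nonneg fun i _ => abs_nonneg _
      linarith
    linarith
  -- recursion: T n = z n + T (n+1)
  have hTrec : ∀ n, T n = (x n - y n) + T (n + 1) := by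
    intro n
    have h1 := Summable.tsum_eq_zero_add (f := fun k => x (k + n) - y (k + n)) (hzn n)
    have h2 : ∑' k, (x (k + 1 + n) - y (k + 1 + n)) = T (n + 1) := by
      refine tsum_congr fun k => ?_
      rw [show k + 1 + n = k + (n + 1) from by omega]
    simp only [zero_add] at h1
    rw [hT_def]
    simp only [h1, h2]
    rfl
  -- partial sums
  have hpartial : ∀ n, ∑ k ∈ Finset.range n, (x k - y k) + T n = T 0 := by
    intro n
    induction n with
    | zero => simp
    | succ m ih =>
      rw [Finset.sum_range_succ]
      have := hTrec m
      linarith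
  -- pointwise identity
  have hpt : ∀ n, (opA x n - opA y n) * (x n - y n) = T n ^ 2 - T (n + 1) ^ 2 := by
    intro n
    have hx1 : Summable fun k => x (n + 1 + k) :=
      ((summable_nat_add_iff (f := x) (n + 1)).mpr hxs).congr
        fun k => by rw [show k + (n + 1) = n + 1 + k from by omega]
    have hy1 : Summable fun k => y (n + 1 + k) :=
      ((summable_nat_add_iff (f := y) (n + 1)).mpr hys).congr
        fun k => by rw [show k + (n + 1) = n + 1 + k from by omega]
    have e1 : (∑' k, x (n + 1 + k)) - (∑' k, y (n + 1 + k)) = T (n + 1) := by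
      rw [← Summable.tsum_sub hx1 hy1]
      exact tsum_congr fun k => by rw [show k + (n + 1) = n + 1 + k from by omega]
    have e2 : (∑' k, x k) - (∑' k, y k) = T 0 := by
      rw [← Summable.tsum_sub hxs hys]
      exact tsum_congr fun k => by simp
    have e3 : (∑ k ∈ Finset.range n, x k) - ∑ k ∈ Finset.range n, y k
        = ∑ k ∈ Finset.range n, (x k - y k) := (Finset.sum_sub_distrib _ _).symm
    have h1 : opA x n - opA y n = T (n + 1) + T n := by
      simp only [opA, gossez]
      have hp := hpartial n
      linarith
    have h2 : x n - y n = T n - T (n + 1) := by have := hTrec n; linarith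
    rw [h1, h2]; ring
  -- summability of the telescoping terms
  have hsum : Summable fun n => T n ^ 2 - T (n + 1) ^ 2 := by
    refine Summable.of_norm_bounded (g := fun n => 2 * M * |x n - y n|)
      (by simpa using hzabs.mul_left (2 * M)) fun n => ?_
    have h2 : x n - y n = T n - T (n + 1) := by have := hTrec n; linarith
    have : T n ^ 2 - T (n + 1) ^ 2 = (T n + T (n + 1)) * (x n - y n) := by
      rw [h2]; ring
    rw [Real.norm_eq_abs, this, abs_mul]
    have hb : |T n + T (n + 1)| ≤ 2 * M := by
      have := hTle n; have := hTle (n + 1)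
      have := abs_add_le (T n) (T (n + 1))
      linarith
    exact mul_le_mul_of_nonneg_right hb (abs_nonneg _)
  -- value of the telescoping sum
  have hT0 : Filter.Tendsto T Filter.atTop (nhds 0) :=
    tendsto_sum_nat_add fun m => x m - y m
  have hps : Filter.Tendsto (fun N => ∑ n ∈ Finset.range N, (T n ^ 2 - T (n + 1) ^ 2))
      Filter.atTop (nhds (T 0 ^ 2)) := by
    have heq : ∀ N, ∑ n ∈ Finset.range N, (T n ^ 2 - T (n + 1) ^ 2) = T 0 ^ 2 - T N ^ 2 :=
      fun N => Finset.sum_range_sub' (fun i => T i ^ 2) N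
    simp only [heq]
    have : Filter.Tendsto (fun N => T N ^ 2) Filter.atTop (nhds (0 ^ 2)) := hT0.pow 2
    simpa using (tendsto_const_nhds (x := T 0 ^ 2)).sub this
  have htsum : ∑' n, (T n ^ 2 - T (n + 1) ^ 2) = T 0 ^ 2 :=
    tendsto_nhds_unique hsum.hasSum.tendsto_sum_nat hps
  have hmain : ∑' n, (opA x n - opA y n) * (x n - y n) = T 0 ^ 2 := by
    rw [tsum_congr hpt, htsum]
  rw [hmain]
  nlinarith [sq_nonneg (T 0), sq_nonneg (s - t), sq_nonneg (s + t), sq_nonneg (s^2 - t^2),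
    sq_nonneg ((s - t) * (s + t))]
end
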